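/- Cut elimination: every sequent Γ ⊃ Δ derivable in the sequent calculus G with cut is derivable in the cut-free sequent calculus Gcf (where the axiom rule is restricted to atomic formulas). -/
import Mathlib


inductive PropF (V : Type) : Type
  | Var : V → PropF V
  | Bot : PropF V
  | Conj : PropF V → PropF V → PropF V
  | Disj : PropF V → PropF V → PropF V
  | Impl : PropF V → PropF V → PropF V
deriving DecidableEq

variable {V : Type} [DecidableEq V]

def PropF.Neg (A : PropF V) : PropF V := A.Impl .Bot
def PropF.Top : PropF V := PropF.Neg .Bot

def TrueQ (v : V → Bool) : PropF V → Bool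
  | .Var p => v p
  | .Bot => false
  | .Conj B C => TrueQ v B && TrueQ v C
  | .Disj B C => TrueQ v B || TrueQ v C
  | .Impl B C => !(TrueQ v B) || TrueQ v C

def Satisfies (v : V → Bool) (Γ : List (PropF V)) : Prop := ∀ A ∈ Γ, TrueQ v A = true
def Models (Γ : List (PropF V)) (A : PropF V) : Prop := ∀ v, Satisfies v Γ → TrueQ v A = true
def Valid (A : PropF V) : Prop := Models [] A
def Validates (v : V → Bool) (Δ : List (PropF V)) : Prop := ∃ A ∈ Δ, TrueQ v A = true

inductive Nc : List (PropF V) → PropF V → Prop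
  | Nax (Γ : List (PropF V)) (A : PropF V) : A ∈ Γ → Nc Γ A
  | ImpI (Γ : List (PropF V)) (A B : PropF V) : Nc (A :: Γ) B → Nc Γ (A.Impl B)
  | ImpE (Γ : List (PropF V)) (A B : PropF V) : Nc Γ (A.Impl B) → Nc Γ A → Nc Γ B
  | BotC (Γ : List (PropF V)) (A : PropF V) : Nc (A.Neg :: Γ) .Bot → Nc Γ A
  | AndI (Γ : List (PropF V)) (A B : PropF V) : Nc Γ A → Nc Γ B → Nc Γ (A.Conj B)
  | AndE1 (Γ : List (PropF V)) (A B : PropF V) : Nc Γ (A.Conj B) → Nc Γ A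
  | AndE2 (Γ : List (PropF V)) (A B : PropF V) : Nc Γ (A.Conj B) → Nc Γ B
  | OrI1 (Γ : List (PropF V)) (A B : PropF V) : Nc Γ A → Nc Γ (A.Disj B)
  | OrI2 (Γ : List (PropF V)) (A B : PropF V) : Nc Γ B → Nc Γ (A.Disj B)
  | OrE (Γ : List (PropF V)) (A B C : PropF V) : Nc Γ (A.Disj B) → Nc (A :: Γ) C → Nc (B :: Γ) C → Nc Γ C

def Provable (A : PropF V) : Prop := Nc [] A

inductive NNF (V : Type) : Type
  | NPos : V → NNF V
  | NNeg : V → NNF V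
  | NBot : NNF V
  | NTop : NNF V
  | NConj : NNF V → NNF V → NNF V
  | NDisj : NNF V → NNF V → NNF V
deriving DecidableEq

def NNFtoPropF : NNF V → PropF V
  | .NPos p => .Var p
  | .NNeg p => (PropF.Var p).Neg
  | .NBot => .Bot
  | .NTop => PropF.Top
  | .NConj B C => (NNFtoPropF B).Conj (NNFtoPropF C)
  | .NDisj B C => (NNFtoPropF B).Disj (NNFtoPropF C)

mutual
def MakeNNF : PropF V → NNF V
  | .Var p => .NPos p
  | .Bot => .NBot
  | .Disj B C => .NDisj (MakeNNF B) (MakeNNF C)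
  | .Conj B C => .NConj (MakeNNF B) (MakeNNF C)
  | .Impl B C => .NDisj (MakeNNFN B) (MakeNNF C)
def MakeNNFN : PropF V → NNF V
  | .Var p => .NNeg p
  | .Bot => .NTop
  | .Disj B C => .NConj (MakeNNFN B) (MakeNNFN C)
  | .Conj B C => .NDisj (MakeNNFN B) (MakeNNFN C)
  | .Impl B C => .NConj (MakeNNF B) (MakeNNFN C)
end

inductive Lit (V : Type) : Type
  | LPos : V → Lit V
  | LNeg : V → Lit V
  | LBot : Lit V
  | LTop : Lit V
deriving DecidableEq

def LiteraltoPropF : Lit V → PropF V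
  | .LPos p => .Var p
  | .LNeg p => (PropF.Var p).Neg
  | .LBot => .Bot
  | .LTop => PropF.Top

abbrev Clause (V : Type) : Type := List (Lit V)
abbrev CNF (V : Type) : Type := List (Clause V)

abbrev ClausetoPropF (l : Clause V) : PropF V :=
  l.foldr (fun a r => (LiteraltoPropF a).Disj r) .Bot

def CNFtoPropF (ll : CNF V) : PropF V :=
  ll.foldr (fun c r => (ClausetoPropF c).Conj r) PropF.Top

def AddClause (l : Clause V) (ll : CNF V) : CNF V := ll.map (fun l2 => l ++ l2)
def Disjunct (ll ll2 : CNF V) : CNF V := ll.flatMap (fun l => AddClause l ll2)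

def MakeCNF : NNF V → CNF V
  | .NPos p => [[.LPos p]]
  | .NNeg p => [[.LNeg p]]
  | .NBot => [[.LBot]]
  | .NTop => [[.LTop]]
  | .NConj B C => MakeCNF B ++ MakeCNF C
  | .NDisj B C => Disjunct (MakeCNF B) (MakeCNF C)

def Valid_Clause (l : Clause V) : Prop :=
  Lit.LTop ∈ l ∨ ∃ p, Lit.LPos p ∈ l ∧ Lit.LNeg p ∈ l
def Valid_CNF (ll : CNF V) : Prop := ∀ l ∈ ll, Valid_Clause l

inductive AxiomH : PropF V → Prop
  | HOrI1 (A B : PropF V) : AxiomH (A.Impl (A.Disj B))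
  | HOrI2 (A B : PropF V) : AxiomH (B.Impl (A.Disj B))
  | HAndI (A B : PropF V) : AxiomH (A.Impl (B.Impl (A.Conj B)))
  | HOrE (A B C : PropF V) : AxiomH ((A.Disj B).Impl ((A.Impl C).Impl ((B.Impl C).Impl C)))
  | HAndE1 (A B : PropF V) : AxiomH ((A.Conj B).Impl A)
  | HAndE2 (A B : PropF V) : AxiomH ((A.Conj B).Impl B)
  | HS (A B C : PropF V) : AxiomH ((A.Impl (B.Impl C)).Impl ((A.Impl B).Impl (A.Impl C)))
  | HK (A B : PropF V) : AxiomH (A.Impl (B.Impl A))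
  | HClas (A : PropF V) : AxiomH ((A.Neg.Neg).Impl A)

inductive Hc : List (PropF V) → PropF V → Prop
  | Hass (A : PropF V) (Γ : List (PropF V)) : A ∈ Γ → Hc Γ A
  | Hax (A : PropF V) (Γ : List (PropF V)) : AxiomH A → Hc Γ A
  | HImpE (Γ : List (PropF V)) (A B : PropF V) : Hc Γ (A.Impl B) → Hc Γ A → Hc Γ B

inductive G : List (PropF V) → List (PropF V) → Prop
  | Gax (A : PropF V) (Γ Δ : List (PropF V)) : A ∈ Γ → A ∈ Δ → G Γ Δ
  | GBot (Γ Δ : List (PropF V)) : PropF.Bot ∈ Γ → G Γ Δ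
  | AndL (A B : PropF V) (Γ1 Γ2 Δ : List (PropF V)) : G (Γ1 ++ A :: B :: Γ2) Δ → G (Γ1 ++ (A.Conj B) :: Γ2) Δ
  | AndR (A B : PropF V) (Γ Δ1 Δ2 : List (PropF V)) : G Γ (Δ1 ++ A :: Δ2) → G Γ (Δ1 ++ B :: Δ2) → G Γ (Δ1 ++ (A.Conj B) :: Δ2)
  | OrL (A B : PropF V) (Γ1 Γ2 Δ : List (PropF V)) : G (Γ1 ++ A :: Γ2) Δ → G (Γ1 ++ B :: Γ2) Δ → G (Γ1 ++ (A.Disj B) :: Γ2) Δ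
  | OrR (A B : PropF V) (Γ Δ1 Δ2 : List (PropF V)) : G Γ (Δ1 ++ A :: B :: Δ2) → G Γ (Δ1 ++ (A.Disj B) :: Δ2)
  | ImpL (A B : PropF V) (Γ1 Γ2 Δ : List (PropF V)) : G (Γ1 ++ B :: Γ2) Δ → G (Γ1 ++ Γ2) (A :: Δ) → G (Γ1 ++ (A.Impl B) :: Γ2) Δ
  | ImpR (A B : PropF V) (Γ Δ1 Δ2 : List (PropF V)) : G (A :: Γ) (Δ1 ++ B :: Δ2) → G Γ (Δ1 ++ (A.Impl B) :: Δ2)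
  | Cut (A : PropF V) (Γ Δ : List (PropF V)) : G Γ (A :: Δ) → G (A :: Γ) Δ → G Γ Δ

inductive Gcf : List (PropF V) → List (PropF V) → Prop
  | Gax (p : V) (Γ Δ : List (PropF V)) : PropF.Var p ∈ Γ → PropF.Var p ∈ Δ → Gcf Γ Δ
  | GBot (Γ Δ : List (PropF V)) : PropF.Bot ∈ Γ → Gcf Γ Δ
  | AndL (A B : PropF V) (Γ1 Γ2 Δ : List (PropF V)) : Gcf (Γ1 ++ A :: B :: Γ2) Δ → Gcf (Γ1 ++ (A.Conj B) :: Γ2) Δ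
  | AndR (A B : PropF V) (Γ Δ1 Δ2 : List (PropF V)) : Gcf Γ (Δ1 ++ A :: Δ2) → Gcf Γ (Δ1 ++ B :: Δ2) → Gcf Γ (Δ1 ++ (A.Conj B) :: Δ2)
  | OrL (A B : PropF V) (Γ1 Γ2 Δ : List (PropF V)) : Gcf (Γ1 ++ A :: Γ2) Δ → Gcf (Γ1 ++ B :: Γ2) Δ → Gcf (Γ1 ++ (A.Disj B) :: Γ2) Δ
  | OrR (A B : PropF V) (Γ Δ1 Δ2 : List (PropF V)) : Gcf Γ (Δ1 ++ A :: B :: Δ2) → Gcf Γ (Δ1 ++ (A.Disj B) :: Δ2)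
  | ImpL (A B : PropF V) (Γ1 Γ2 Δ : List (PropF V)) : Gcf (Γ1 ++ B :: Γ2) Δ → Gcf (Γ1 ++ Γ2) (A :: Δ) → Gcf (Γ1 ++ (A.Impl B) :: Γ2) Δ
  | ImpR (A B : PropF V) (Γ Δ1 Δ2 : List (PropF V)) : Gcf (A :: Γ) (Δ1 ++ B :: Δ2) → Gcf Γ (Δ1 ++ (A.Impl B) :: Δ2)

def BigOr (Δ : List (PropF V)) : PropF V := Δ.foldr PropF.Disj .Bot

def size : PropF V → Nat
  | .Var _ => 0
  | .Bot => 0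
  | .Conj B C => (size B + size C).succ
  | .Disj B C => (size B + size C).succ
  | .Impl B C => (size B + size C).succ

def sizel (Γ : List (PropF V)) : Nat := (Γ.map size).sum
def sizes (Γ Δ : List (PropF V)) : Nat := sizel Γ + sizel Δ

def Sq (Γ Δ : List (PropF V)) : Prop := ∀ v, Satisfies v Γ → Validates v Δ

lemma sat_cons {v : V → Bool} {A : PropF V} {Γ : List (PropF V)} :
    Satisfies v (A :: Γ) ↔ TrueQ v A = true ∧ Satisfies v Γ := by
  simp [Satisfies]

lemma sat_append {v : V → Bool} {Γ1 Γ2 : List (PropF V)} :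
    Satisfies v (Γ1 ++ Γ2) ↔ Satisfies v Γ1 ∧ Satisfies v Γ2 := by
  simp [Satisfies, or_imp, forall_and]

lemma val_cons {v : V → Bool} {A : PropF V} {Δ : List (PropF V)} :
    Validates v (A :: Δ) ↔ TrueQ v A = true ∨ Validates v Δ := by
  simp [Validates]

lemma val_append {v : V → Bool} {Δ1 Δ2 : List (PropF V)} :
    Validates v (Δ1 ++ Δ2) ↔ Validates v Δ1 ∨ Validates v Δ2 := by
  simp [Validates, or_and_right, exists_or]

lemma G_sound {Γ Δ : List (PropF V)} (h : G Γ Δ) : Sq Γ Δ := by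
  induction h with
  | Gax A Γ Δ h1 h2 =>
    intro v hs; exact ⟨A, h2, hs A h1⟩
  | GBot Γ Δ h1 =>
    intro v hs; have := hs _ h1; simp [TrueQ] at this
  | AndL A B Γ1 Γ2 Δ _ ih =>
    intro v hs
    simp only [sat_append, sat_cons, TrueQ, Bool.and_eq_true] at hs
    apply ih v
    simp only [sat_append, sat_cons]
    exact ⟨hs.1, hs.2.1.1, hs.2.1.2, hs.2.2⟩
  | AndR A B Γ Δ1 Δ2 _ _ ih1 ih2 =>
    intro v hs
    have h1 := ih1 v hs; have h2 := ih2 v hs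
    simp only [val_append, val_cons, TrueQ, Bool.and_eq_true] at h1 h2 ⊢
    tauto
  | OrL A B Γ1 Γ2 Δ _ _ ih1 ih2 =>
    intro v hs
    simp only [sat_append, sat_cons, TrueQ, Bool.or_eq_true] at hs
    rcases hs with ⟨hl, hAB, hr⟩
    rcases hAB with hA | hB
    · exact ih1 v (by simp only [sat_append, sat_cons]; exact ⟨hl, hA, hr⟩)
    · exact ih2 v (by simp only [sat_append, sat_cons]; exact ⟨hl, hB, hr⟩)
  | OrR A B Γ Δ1 Δ2 _ ih =>
    intro v hs
    have h1 := ih v hs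
    simp only [val_append, val_cons, TrueQ, Bool.or_eq_true] at h1 ⊢
    tauto
  | ImpL A B Γ1 Γ2 Δ _ _ ih1 ih2 =>
    intro v hs
    simp only [sat_append, sat_cons, TrueQ, Bool.or_eq_true, Bool.not_eq_true',
      Bool.not_eq_eq_eq_not, Bool.not_true] at hs
    rcases hs with ⟨hl, hAB, hr⟩
    rcases hAB with hA | hB
    · have h2 := ih2 v (by simp only [sat_append]; exact ⟨hl, hr⟩)
      rcases (val_cons.mp h2) with hA' | hΔ
      · rw [hA] at hA'; cases hA'
      · exact hΔ
    · exact ih1 v (by simp only [sat_append, sat_cons]; exact ⟨hl, hB, hr⟩)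
  | ImpR A B Γ Δ1 Δ2 _ ih =>
    intro v hs
    simp only [val_append, val_cons, TrueQ, Bool.or_eq_true, Bool.not_eq_true',
      Bool.not_eq_eq_eq_not, Bool.not_true]
    by_cases hA : TrueQ v A = true
    · have h1 := ih v (sat_cons.mpr ⟨hA, hs⟩)
      simp only [val_append, val_cons] at h1
      tauto
    · simp at hA; tauto
  | Cut A Γ Δ _ _ ih1 ih2 =>
    intro v hs
    rcases (val_cons.mp (ih1 v hs)) with hA | hΔ
    · exact ih2 v (sat_cons.mpr ⟨hA, hs⟩)
    · exact hΔ

lemma sizel_append (Γ1 Γ2 : List (PropF V)) : sizel (Γ1 ++ Γ2) = sizel Γ1 + sizel Γ2 := by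
  simp [sizel]

lemma sizel_cons (A : PropF V) (Γ : List (PropF V)) : sizel (A :: Γ) = size A + sizel Γ := by
  simp [sizel]

lemma Sq_AndL {A B : PropF V} {Γ1 Γ2 Δ : List (PropF V)}
    (h : Sq (Γ1 ++ (A.Conj B) :: Γ2) Δ) : Sq (Γ1 ++ A :: B :: Γ2) Δ := by
  intro v hs
  simp only [sat_append, sat_cons] at hs
  exact h v (by simp only [sat_append, sat_cons, TrueQ, Bool.and_eq_true]; tauto)

lemma Sq_AndR1 {A B : PropF V} {Γ Δ1 Δ2 : List (PropF V)}
    (h : Sq Γ (Δ1 ++ (A.Conj B) :: Δ2)) : Sq Γ (Δ1 ++ A :: Δ2) := by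
  intro v hs
  have := h v hs
  simp only [val_append, val_cons, TrueQ, Bool.and_eq_true] at this ⊢
  tauto

lemma Sq_AndR2 {A B : PropF V} {Γ Δ1 Δ2 : List (PropF V)}
    (h : Sq Γ (Δ1 ++ (A.Conj B) :: Δ2)) : Sq Γ (Δ1 ++ B :: Δ2) := by
  intro v hs
  have := h v hs
  simp only [val_append, val_cons, TrueQ, Bool.and_eq_true] at this ⊢
  tauto

lemma Sq_OrL1 {A B : PropF V} {Γ1 Γ2 Δ : List (PropF V)}
    (h : Sq (Γ1 ++ (A.Disj B) :: Γ2) Δ) : Sq (Γ1 ++ A :: Γ2) Δ := by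
  intro v hs
  simp only [sat_append, sat_cons] at hs
  exact h v (by simp only [sat_append, sat_cons, TrueQ, Bool.or_eq_true]; tauto)

lemma Sq_OrL2 {A B : PropF V} {Γ1 Γ2 Δ : List (PropF V)}
    (h : Sq (Γ1 ++ (A.Disj B) :: Γ2) Δ) : Sq (Γ1 ++ B :: Γ2) Δ := by
  intro v hs
  simp only [sat_append, sat_cons] at hs
  exact h v (by simp only [sat_append, sat_cons, TrueQ, Bool.or_eq_true]; tauto)

lemma Sq_OrR {A B : PropF V} {Γ Δ1 Δ2 : List (PropF V)}
    (h : Sq Γ (Δ1 ++ (A.Disj B) :: Δ2)) : Sq Γ (Δ1 ++ A :: B :: Δ2) := by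
  intro v hs
  have := h v hs
  simp only [val_append, val_cons, TrueQ, Bool.or_eq_true] at this ⊢
  tauto

lemma Sq_ImpL1 {A B : PropF V} {Γ1 Γ2 Δ : List (PropF V)}
    (h : Sq (Γ1 ++ (A.Impl B) :: Γ2) Δ) : Sq (Γ1 ++ B :: Γ2) Δ := by
  intro v hs
  simp only [sat_append, sat_cons] at hs
  apply h v
  simp only [sat_append, sat_cons, TrueQ, Bool.or_eq_true]
  refine ⟨hs.1, Or.inr hs.2.1, hs.2.2⟩

lemma Sq_ImpL2 {A B : PropF V} {Γ1 Γ2 Δ : List (PropF V)}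
    (h : Sq (Γ1 ++ (A.Impl B) :: Γ2) Δ) : Sq (Γ1 ++ Γ2) (A :: Δ) := by
  intro v hs
  simp only [sat_append] at hs
  simp only [val_cons]
  by_cases hA : TrueQ v A = true
  · exact Or.inl hA
  · refine Or.inr (h v ?_)
    simp only [sat_append, sat_cons, TrueQ, Bool.or_eq_true, Bool.not_eq_true',
      Bool.not_eq_eq_eq_not, Bool.not_true]
    simp only [Bool.not_eq_true] at hA
    exact ⟨hs.1, Or.inl hA, hs.2⟩

lemma Sq_ImpR {A B : PropF V} {Γ Δ1 Δ2 : List (PropF V)}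
    (h : Sq Γ (Δ1 ++ (A.Impl B) :: Δ2)) : Sq (A :: Γ) (Δ1 ++ B :: Δ2) := by
  intro v hs
  rcases sat_cons.mp hs with ⟨hA, hΓ⟩
  have := h v hΓ
  simp only [val_append, val_cons, TrueQ, Bool.or_eq_true, Bool.not_eq_true'] at this ⊢
  rcases this with h1 | h2 | h3
  · tauto
  · rcases h2 with h2 | h2
    · rw [hA] at h2; cases h2
    · tauto
  · tauto

lemma Gcf_atomic {Γ Δ : List (PropF V)} (hΓ : ∀ A ∈ Γ, size A = 0)
    (hΔ : ∀ A ∈ Δ, size A = 0) (hv : Sq Γ Δ) : Gcf Γ Δ := by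
  by_cases hb : PropF.Bot ∈ Γ
  · exact Gcf.GBot Γ Δ hb
  by_cases hshared : ∃ p, PropF.Var p ∈ Γ ∧ PropF.Var p ∈ Δ
  · rcases hshared with ⟨p, h1, h2⟩
    exact Gcf.Gax p Γ Δ h1 h2
  exfalso
  set v : V → Bool := fun p => decide (PropF.Var p ∈ Γ) with hvdef
  have hs : Satisfies v Γ := by
    intro A hA
    match A with
    | .Var p => simp [TrueQ, hvdef, hA]
    | .Bot => exact absurd hA hb
    | .Conj B C => have := hΓ _ hA; simp [size] at this
    | .Disj B C => have := hΓ _ hA; simp [size] at this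
    | .Impl B C => have := hΓ _ hA; simp [size] at this
  rcases hv v hs with ⟨A, hA, ht⟩
  match A with
  | .Var p =>
    simp [TrueQ, hvdef] at ht
    exact hshared ⟨p, ht, hA⟩
  | .Bot => simp [TrueQ] at ht
  | .Conj B C => have := hΔ _ hA; simp [size] at this
  | .Disj B C => have := hΔ _ hA; simp [size] at this
  | .Impl B C => have := hΔ _ hA; simp [size] at this

lemma Gcf_complete : ∀ n (Γ Δ : List (PropF V)), sizes Γ Δ ≤ n → Sq Γ Δ → Gcf Γ Δ := by
  intro n
  induction n with
  | zero =>
    intro Γ Δ hn hv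
    have hΓ : ∀ A ∈ Γ, size A = 0 := by
      intro A hA
      have h1 : size A ≤ sizel Γ := by
        rcases List.append_of_mem hA with ⟨s, t, rfl⟩
        rw [sizel_append, sizel_cons]; omega
      simp [sizes] at hn; omega
    have hΔ : ∀ A ∈ Δ, size A = 0 := by
      intro A hA
      have h1 : size A ≤ sizel Δ := by
        rcases List.append_of_mem hA with ⟨s, t, rfl⟩
        rw [sizel_append, sizel_cons]; omega
      simp [sizes] at hn; omega
    exact Gcf_atomic hΓ hΔ hv
  | succ n ih =>
    intro Γ Δ hn hv
    by_cases hcomp : (∃ A ∈ Γ, size A ≠ 0) ∨ (∃ A ∈ Δ, size A ≠ 0)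
    · rcases hcomp with ⟨A, hA, hs⟩ | ⟨A, hA, hs⟩
      · rcases List.append_of_mem hA with ⟨Γ1, Γ2, rfl⟩
        have hsz : sizes (Γ1 ++ A :: Γ2) Δ ≤ n + 1 := hn
        match A with
        | .Var p => simp [size] at hs
        | .Bot => simp [size] at hs
        | .Conj B C =>
          apply Gcf.AndL
          apply ih _ _ ?_ (Sq_AndL hv)
          simp only [sizes, sizel_append, sizel_cons, size] at hsz ⊢; omega
        | .Disj B C =>
          apply Gcf.OrL
          · apply ih _ _ ?_ (Sq_OrL1 hv)
            simp only [sizes, sizel_append, sizel_cons, size] at hsz ⊢; omega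
          · apply ih _ _ ?_ (Sq_OrL2 hv)
            simp only [sizes, sizel_append, sizel_cons, size] at hsz ⊢; omega
        | .Impl B C =>
          apply Gcf.ImpL
          · apply ih _ _ ?_ (Sq_ImpL1 hv)
            simp only [sizes, sizel_append, sizel_cons, size] at hsz ⊢; omega
          · apply ih _ _ ?_ (Sq_ImpL2 hv)
            simp only [sizes, sizel_append, sizel_cons, size] at hsz ⊢; omega
      · rcases List.append_of_mem hA with ⟨Δ1, Δ2, rfl⟩
        have hsz : sizes Γ (Δ1 ++ A :: Δ2) ≤ n + 1 := hn
        match A with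
        | .Var p => simp [size] at hs
        | .Bot => simp [size] at hs
        | .Conj B C =>
          apply Gcf.AndR
          · apply ih _ _ ?_ (Sq_AndR1 hv)
            simp only [sizes, sizel_append, sizel_cons, size] at hsz ⊢; omega
          · apply ih _ _ ?_ (Sq_AndR2 hv)
            simp only [sizes, sizel_append, sizel_cons, size] at hsz ⊢; omega
        | .Disj B C =>
          apply Gcf.OrR
          apply ih _ _ ?_ (Sq_OrR hv)
          simp only [sizes, sizel_append, sizel_cons, size] at hsz ⊢; omega
        | .Impl B C =>
          apply Gcf.ImpR
          apply ih _ _ ?_ (Sq_ImpR hv)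
          simp only [sizes, sizel_append, sizel_cons, size] at hsz ⊢; omega
    · push_neg at hcomp
      exact Gcf_atomic hcomp.1 hcomp.2 hv

theorem stmt18 {V : Type} [DecidableEq V] (Γ Δ : List (PropF V)) (h : G Γ Δ) :
    Gcf Γ Δ :=
  Gcf_complete (sizes Γ Δ) Γ Δ le_rfl (G_sound h)
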